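/- Let the directive bi-sequence Λ=(Δ,Θ) over the ternary alphabet {0,1,2} satisfy: each of the letters 0,1,2 occurs infinitely many times in Δ, and the set of antimorphisms occurring infinitely many times in Θ consists of exactly two antimorphisms ϑ₁,ϑ₂∈{E₀,E₁,E₂,R}. Then the word u=u(Δ,Θ) is aperiodic. -/

import Mathlib

/-!
Generalized pseudostandard words (de Luca–De Luca) over binary and ternary
alphabets: antimorphisms, pseudopalindromic closure, directive bi-sequences.
-/

namespace GPS

variable {A : Type*} [Inhabited A]

/-- The involutory antimorphism on finite words induced by the letter map `f`:
reverse the word and apply `f` letterwise. -/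
def anti (f : A → A) (w : List A) : List A := (w.map f).reverse

/-- `w` is an `f`-palindrome (a `ϑ`-palindrome for the antimorphism induced by `f`). -/
def IsPal (f : A → A) (w : List A) : Prop := anti f w = w

/-- The `f`-palindromic closure of `w`: a shortest `f`-palindrome having `w` as a
prefix (returns `w` itself in the degenerate case where none exists). -/
noncomputable def closure (f : A → A) (w : List A) : List A := by
  classical
  exact if h : ∃ n : ℕ, ∃ p : List A, p.length = n ∧ w <+: p ∧ IsPal f p then
    Classical.choose (Nat.find_spec h)
  else w

/-- The sequence of pseudopalindromic prefixes `w_n` of the generalized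
pseudostandard word `u(Δ, Θ)`; `prefixes Δ Θ n` is the paper's `w_n`, with
`Δ n = δ_{n+1}` and `Θ n = ϑ_{n+1}` (0-based indexing of the bi-sequence). -/
noncomputable def prefixes (Δ : ℕ → A) (Θ : ℕ → A → A) : ℕ → List A
  | 0 => []
  | n + 1 => closure (Θ n) (prefixes Δ Θ n ++ [Δ n])

/-- The generalized pseudostandard word `u(Δ, Θ)` as an infinite word `ℕ → A`. -/
noncomputable def word (Δ : ℕ → A) (Θ : ℕ → A → A) (k : ℕ) : A :=
  (prefixes Δ Θ (k + 1)).getD k default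

/-- `p` is a (finite) prefix of the infinite word `x`. -/
def IsPref (p : List A) (x : ℕ → A) : Prop := ∀ i < p.length, p.getD i default = x i

/-- `w` is a factor of the infinite word `x`. -/
def IsFactor (w : List A) (x : ℕ → A) : Prop :=
  ∃ i : ℕ, ∀ j < w.length, w.getD j default = x (i + j)

/-- `w` is a left special factor of the infinite word `x`. -/
def LeftSpecial (w : List A) (x : ℕ → A) : Prop :=
  ∃ a b : A, a ≠ b ∧ IsFactor (a :: w) x ∧ IsFactor (b :: w) x

/-- The infinite word `x` is (eventually) periodic, i.e. of the form `z v^ω`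
with `v` nonempty. -/
def Periodic (x : ℕ → A) : Prop :=
  ∃ p : ℕ, 0 < p ∧ ∃ N : ℕ, ∀ n, N ≤ n → x (n + p) = x n

/-- The infinite word `x` is purely periodic with period `q`, i.e. `x = q^ω`. -/
def PurePeriod (q : List A) (x : ℕ → A) : Prop :=
  q ≠ [] ∧ ∀ i : ℕ, x i = q.getD (i % q.length) default

/-- Concatenation of `k` copies of the finite word `l`, i.e. `l^k`. -/
def wpow (l : List A) (k : ℕ) : List A := (List.replicate k l).flatten

/-! ### The binary alphabet `{0,1}` -/

/-- Letter map of the reversal antimorphism `R` over `{0,1}`. -/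
def Rb : Fin 2 → Fin 2 := id

/-- Letter map of the exchange antimorphism `E` over `{0,1}` (`0 ↔ 1`). -/
def Eb : Fin 2 → Fin 2 := fun x => x + 1

/-- A binary directive bi-sequence is normalized if the sequence `(w_n)` contains
every prefix of `u(Δ,Θ)` that is an `R`-palindrome or an `E`-palindrome. -/
def NormalizedB (Δ : ℕ → Fin 2) (Θ : ℕ → Fin 2 → Fin 2) : Prop :=
  ∀ p : List (Fin 2), IsPref p (word Δ Θ) → (IsPal Rb p ∨ IsPal Eb p) →
    ∃ n : ℕ, prefixes Δ Θ n = p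

/-! ### The ternary alphabet `{0,1,2}` -/

/-- Letter map of the reversal antimorphism `R` over `{0,1,2}`. -/
def Rt : Fin 3 → Fin 3 := id

/-- Letter map of the exchange antimorphism `E_i` over `{0,1,2}`: it fixes `i`
and exchanges the other two letters (indeed `-(i+x) = i` iff `x = i` in `Fin 3`). -/
def Et (i : Fin 3) : Fin 3 → Fin 3 := fun x => -(i + x)

/-- A ternary directive bi-sequence is normalized if the sequence `(w_n)` contains
every prefix of `u(Δ,Θ)` that is a `ϑ`-palindrome for some involutory antimorphism `ϑ`. -/
def NormalizedT (Δ : ℕ → Fin 3) (Θ : ℕ → Fin 3 → Fin 3) : Prop :=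
  ∀ p : List (Fin 3), IsPref p (word Δ Θ) → (IsPal Rt p ∨ ∃ i : Fin 3, IsPal (Et i) p) →
    ∃ n : ℕ, prefixes Δ Θ n = p

end GPS
namespace GPS

variable {A : Type*} [Inhabited A]

set_option linter.unusedSectionVars false in
lemma anti_append (f : A → A) (u v : List A) :
    anti f (u ++ v) = anti f v ++ anti f u := by simp [anti]

set_option linter.unusedSectionVars false in
lemma anti_anti {f : A → A} (hf : ∀ a, f (f a) = a) (w : List A) :
    anti f (anti f w) = w := by
  unfold anti
  rw [List.map_reverse, List.reverse_reverse, List.map_map]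
  have h : f ∘ f = id := funext hf
  rw [h, List.map_id]

set_option linter.unusedSectionVars false in
lemma closure_spec {f : A → A} (hf : ∀ a, f (f a) = a) (w : List A) :
    w <+: closure f w ∧ IsPal f (closure f w) := by
  classical
  have hex : ∃ n : ℕ, ∃ q : List A, q.length = n ∧ w <+: q ∧ IsPal f q := by
    refine ⟨(w ++ anti f w).length, w ++ anti f w, rfl, ⟨anti f w, rfl⟩, ?_⟩
    show anti f (w ++ anti f w) = w ++ anti f w
    rw [anti_append, anti_anti hf]
  have hcl : closure f w = Classical.choose (Nat.find_spec hex) := by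
    unfold closure
    rw [dif_pos hex]
  obtain ⟨-, hpref, hpal⟩ := Classical.choose_spec (Nat.find_spec hex)
  rw [hcl]
  exact ⟨hpref, hpal⟩

lemma getD_of_prefix {l l' : List A} (h : l <+: l') {k : ℕ} (hk : k < l.length) :
    l.getD k default = l'.getD k default := by
  have hk' : k < l'.length := lt_of_lt_of_le hk h.length_le
  rw [List.getD_eq_getElem _ _ hk, List.getD_eq_getElem _ _ hk']
  exact h.getElem hk

lemma pal_getD {f : A → A} {w : List A} (hw : IsPal f w) {j : ℕ} (hj : j < w.length) :
    w.getD j default = f (w.getD (w.length - 1 - j) default) := by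
  have hj2 : w.length - 1 - j < w.length := by omega
  have hlen : (anti f w).length = w.length := by simp [anti]
  have h1 : (anti f w).getD j default = w.getD j default := by rw [hw]
  rw [← h1]
  rw [List.getD_eq_getElem _ _ (by omega : j < (anti f w).length),
      List.getD_eq_getElem _ _ hj2]
  show ((w.map f).reverse)[j]'(by simpa using hj) = _
  rw [List.getElem_reverse]
  rw [List.getElem_map]
  congr 1
  simp

variable (Δ : ℕ → A) (Θ : ℕ → A → A)

lemma prefixes_step (hinv : ∀ n a, Θ n (Θ n a) = a) (n : ℕ) :
    prefixes Δ Θ n ++ [Δ n] <+: prefixes Δ Θ (n + 1) ∧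
      IsPal (Θ n) (prefixes Δ Θ (n + 1)) := by
  have h := closure_spec (hinv n) (prefixes Δ Θ n ++ [Δ n])
  exact h

lemma prefixes_mono (hinv : ∀ n a, Θ n (Θ n a) = a) {m n : ℕ} (h : m ≤ n) :
    prefixes Δ Θ m <+: prefixes Δ Θ n := by
  induction n with
  | zero => simpa [Nat.le_zero.mp h]
  | succ n ih =>
    rcases Nat.lt_or_ge m (n+1) with h' | h'
    · exact (ih (by omega)).trans
        (((prefixes Δ Θ n).prefix_append [Δ n]).trans (prefixes_step Δ Θ hinv n).1)
    · have : m = n + 1 := by omega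
      subst this; rfl

lemma length_succ (hinv : ∀ n a, Θ n (Θ n a) = a) (n : ℕ) :
    (prefixes Δ Θ n).length + 1 ≤ (prefixes Δ Θ (n + 1)).length := by
  have := (prefixes_step Δ Θ hinv n).1.length_le
  simpa using this

lemma le_length (hinv : ∀ n a, Θ n (Θ n a) = a) (n : ℕ) :
    n ≤ (prefixes Δ Θ n).length := by
  induction n with
  | zero => simp
  | succ n ih => have := length_succ Δ Θ hinv n; omega

lemma word_eval (hinv : ∀ n a, Θ n (Θ n a) = a) {n k : ℕ}
    (hk : k < (prefixes Δ Θ n).length) :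
    (prefixes Δ Θ n).getD k default = word Δ Θ k := by
  show _ = (prefixes Δ Θ (k + 1)).getD k default
  rcases le_total n (k + 1) with h | h
  · exact getD_of_prefix (prefixes_mono Δ Θ hinv h) hk
  · exact (getD_of_prefix (prefixes_mono Δ Θ hinv h)
      (lt_of_lt_of_le (Nat.lt_succ_self k) (le_length Δ Θ hinv (k+1)))).symm

lemma delta_eq (hinv : ∀ n a, Θ n (Θ n a) = a) (n : ℕ) :
    word Δ Θ ((prefixes Δ Θ n).length) = Δ n := by
  set m := (prefixes Δ Θ n).length with hm
  have h1 : (prefixes Δ Θ n ++ [Δ n]).getD m default = Δ n := by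
    rw [List.getD_eq_getElem _ _ (by simp [hm])]
    simp [hm]
  have h2 : (prefixes Δ Θ (n+1)).getD m default = Δ n := by
    rw [← h1]
    exact (getD_of_prefix (prefixes_step Δ Θ hinv n).1 (by simp [hm])).symm
  rw [← h2]
  exact (word_eval Δ Θ hinv (by have := length_succ Δ Θ hinv n; omega)).symm

lemma word_pal (hinv : ∀ n a, Θ n (Θ n a) = a) {f : A → A} {n : ℕ}
    (hpal : IsPal f (prefixes Δ Θ n)) :
    ∀ j, j < (prefixes Δ Θ n).length →
      word Δ Θ j = f (word Δ Θ ((prefixes Δ Θ n).length - 1 - j)) := by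
  intro j hj
  have hj2 : (prefixes Δ Θ n).length - 1 - j < (prefixes Δ Θ n).length := by omega
  rw [← word_eval Δ Θ hinv hj, ← word_eval Δ Θ hinv hj2]
  exact pal_getD hpal hj

lemma period_eq (x : ℕ → A) (py N : ℕ) (hp : 0 < py)
    (hper : ∀ n, N ≤ n → x (n + py) = x n) :
    ∀ a b, N ≤ a → N ≤ b → a % py = b % py → x a = x b := by
  have step : ∀ k a, N ≤ a → x (a + py * k) = x a := by
    intro k
    induction k with
    | zero => simp
    | succ k ih =>
      intro a ha
      have h : a + py * (k+1) = (a + py * k) + py := by ring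
      rw [h, hper _ (by omega), ih a ha]
  have main : ∀ a b, N ≤ a → a ≤ b → a % py = b % py → x a = x b := by
    intro a b ha hab hmod
    obtain ⟨k, hk⟩ := (Nat.modEq_iff_dvd' hab).mp hmod
    have hb : b = a + py * k := by omega
    rw [hb, step k a ha]
  intro a b ha hb hmod
  rcases le_total a b with h | h
  · exact main a b ha h hmod
  · exact (main b a hb h hmod.symm).symm

lemma shift_lemma (x : ℕ → A) (py N : ℕ) (hp : 0 < py)
    (hper : ∀ n, N ≤ n → x (n + py) = x n)
    (f : A → A) (hf : Function.Injective f)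
    (L L' : ℕ) (hLL : L ≤ L') (hL : 2 * N + py ≤ L)
    (hpal : ∀ j, j < L → x j = f (x (L - 1 - j)))
    (hpal' : ∀ j, j < L' → x j = f (x (L' - 1 - j)))
    (m : ℕ) (hm : N ≤ m) : x (m + (L' - L)) = x m := by
  obtain ⟨Q, hQ1, hQ2⟩ : ∃ Q, m ≤ Q ∧ Q % py = 0 :=
    ⟨m * py, Nat.le_mul_of_pos_right m hp, Nat.mul_mod_left m py⟩
  set K : ℕ := L - 1 + Q - m - N with hK
  set j : ℕ := N + K % py with hj
  have hKp : K % py < py := Nat.mod_lt _ hp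
  have hjL : j < L := by omega
  have hjL' : j < L' := by omega
  have hLj : N ≤ L - 1 - j := by omega
  have hLj' : N ≤ L' - 1 - j := by omega
  -- congruence: m + j ≡ L - 1 [MOD py]
  have c1 : m + j ≡ L - 1 + Q [MOD py] := by
    have e1 : m + j = m + N + K % py := by omega
    have e2 : m + N + K = L - 1 + Q := by omega
    calc m + j = m + N + K % py := by rw [e1]
      _ ≡ m + N + K [MOD py] := Nat.ModEq.add_left _ (Nat.mod_modEq K py)
      _ = L - 1 + Q := e2
  have c2 : m + j ≡ L - 1 [MOD py] := by
    have : L - 1 + Q ≡ L - 1 + 0 [MOD py] := by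
      refine Nat.ModEq.add_left _ ?_
      show Q % py = 0 % py
      simp [hQ2]
    simpa using c1.trans this
  have c3 : m ≡ L - 1 - j [MOD py] := by
    refine Nat.ModEq.add_right_cancel' j ?_
    have e : (L - 1 - j) + j = L - 1 := by omega
    rw [e]; exact c2
  have c4 : m + (L' - L) ≡ L' - 1 - j [MOD py] := by
    have e : (L - 1 - j) + (L' - L) = L' - 1 - j := by omega
    have := c3.add_right (L' - L)
    rwa [e] at this
  have e1 : x m = x (L - 1 - j) := period_eq x py N hp hper _ _ hm hLj c3
  have e2 : x (m + (L' - L)) = x (L' - 1 - j) :=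
    period_eq x py N hp hper _ _ (by omega) hLj' c4
  have e3 : x (L - 1 - j) = x (L' - 1 - j) :=
    hf ((hpal j hjL).symm.trans (hpal' j hjL'))
  rw [e2, ← e3, ← e1]


/-- if every letter of `{0,1,2}` occurs infinitely many times in `Δ`
and exactly two antimorphisms occur infinitely many times in `Θ`, then `u(Δ,Θ)`
is aperiodic. -/
theorem aperiodic_two_antimorphisms_all_letters (Δ : ℕ → Fin 3) (Θ : ℕ → Fin 3 → Fin 3)
    (hΘ : ∀ n, Θ n = Rt ∨ ∃ i : Fin 3, Θ n = Et i)
    (hΔ : ∀ a : Fin 3, {n | Δ n = a}.Infinite)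
    (ϑ₁ ϑ₂ : Fin 3 → Fin 3)
    (hϑ₁ : ϑ₁ = Rt ∨ ∃ i : Fin 3, ϑ₁ = Et i) (hϑ₂ : ϑ₂ = Rt ∨ ∃ i : Fin 3, ϑ₂ = Et i)
    (hne : ϑ₁ ≠ ϑ₂)
    (h1 : {n | Θ n = ϑ₁}.Infinite) (h2 : {n | Θ n = ϑ₂}.Infinite)
    (hexact : ∀ g : Fin 3 → Fin 3, {n | Θ n = g}.Infinite → g = ϑ₁ ∨ g = ϑ₂) :
    ¬ Periodic (word Δ Θ) := by
  intro hper
  obtain ⟨py, hp, N, hperN⟩ := hper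
  -- involutivity and injectivity of the letter maps
  have hinv : ∀ n a, Θ n (Θ n a) = a := by
    intro n a
    rcases hΘ n with h | ⟨i, h⟩
    · rw [h]; rfl
    · rw [h]; exact (by decide : ∀ i a : Fin 3, Et i (Et i a) = a) i a
  have hinj : ∀ g : Fin 3 → Fin 3, (g = Rt ∨ ∃ i : Fin 3, g = Et i) →
      Function.Injective g := by
    rintro g (rfl | ⟨i, rfl⟩)
    · exact fun a b h => h
    · exact (by decide : ∀ i : Fin 3, Function.Injective (Et i)) i
  -- eventually Θ n ∈ {ϑ₁, ϑ₂}
  have key : ∀ g : Fin 3 → Fin 3, {n | Θ n = g ∧ ¬(g = ϑ₁ ∨ g = ϑ₂)}.Finite := by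
    intro g
    by_cases hg : g = ϑ₁ ∨ g = ϑ₂
    · have : {n | Θ n = g ∧ ¬(g = ϑ₁ ∨ g = ϑ₂)} = ∅ := by
        ext n; simp [hg]
      rw [this]; exact Set.finite_empty
    · have hfin : ¬ {n | Θ n = g}.Infinite := fun hinf => hg (hexact g hinf)
      rw [Set.not_infinite] at hfin
      exact hfin.subset fun n hn => hn.1
  have hfinS : {n | ¬(Θ n = ϑ₁ ∨ Θ n = ϑ₂)}.Finite := by
    have hsub : {n | ¬(Θ n = ϑ₁ ∨ Θ n = ϑ₂)} ⊆
        {n | Θ n = Rt ∧ ¬(Rt = ϑ₁ ∨ Rt = ϑ₂)} ∪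
          ⋃ i : Fin 3, {n | Θ n = Et i ∧ ¬(Et i = ϑ₁ ∨ Et i = ϑ₂)} := by
      intro n hn
      rcases hΘ n with h | ⟨i, h⟩
      · left; exact ⟨h, by rw [← h]; exact hn⟩
      · right; exact Set.mem_iUnion.mpr ⟨i, ⟨h, by rw [← h]; exact hn⟩⟩
    exact Set.Finite.subset ((key Rt).union (Set.finite_iUnion fun i => key (Et i))) hsub
  obtain ⟨M, hM⟩ : ∃ M, ∀ n, M ≤ n → Θ n = ϑ₁ ∨ Θ n = ϑ₂ := by
    obtain ⟨M, hM⟩ := hfinS.bddAbove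
    refine ⟨M + 1, fun n hn => ?_⟩
    by_contra hc
    exact absurd (hM hc) (by omega)
  -- pick large indices where ϑ₁ resp. ϑ₂ occur
  obtain ⟨n₁, hn₁mem, hn₁⟩ := h1.exists_gt (2 * N + py)
  obtain ⟨n₂, hn₂mem, hn₂⟩ := h2.exists_gt (2 * N + py)
  have hn₁mem : Θ n₁ = ϑ₁ := hn₁mem
  have hn₂mem : Θ n₂ = ϑ₂ := hn₂mem
  set L₁ := (prefixes Δ Θ (n₁ + 1)).length with hL₁
  set L₂ := (prefixes Δ Θ (n₂ + 1)).length with hL₂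
  have hpal₁ : IsPal ϑ₁ (prefixes Δ Θ (n₁ + 1)) := by
    rw [← hn₁mem]; exact (prefixes_step Δ Θ hinv n₁).2
  have hpal₂ : IsPal ϑ₂ (prefixes Δ Θ (n₂ + 1)) := by
    rw [← hn₂mem]; exact (prefixes_step Δ Θ hinv n₂).2
  have hL₁big : 2 * N + py ≤ L₁ := by
    have := le_length Δ Θ hinv (n₁ + 1); omega
  have hL₂big : 2 * N + py ≤ L₂ := by
    have := le_length Δ Θ hinv (n₂ + 1); omega
  set a₁ := word Δ Θ L₁ with ha₁
  set a₂ := word Δ Θ L₂ with ha₂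
  -- the letter following any large ϑ₁-palindromic prefix equals a₁
  have C1 : ∀ n, n₁ ≤ n → Θ n = ϑ₁ →
      word Δ Θ ((prefixes Δ Θ (n + 1)).length) = a₁ := by
    intro n hn hθ
    set L := (prefixes Δ Θ (n + 1)).length with hLdef
    have hLL : L₁ ≤ L :=
      (prefixes_mono Δ Θ hinv (Nat.succ_le_succ hn)).length_le
    have hpalL : IsPal ϑ₁ (prefixes Δ Θ (n + 1)) := by
      rw [← hθ]; exact (prefixes_step Δ Θ hinv n).2
    have hs := shift_lemma (word Δ Θ) py N hp hperN ϑ₁ (hinj ϑ₁ hϑ₁) L₁ L hLL hL₁big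
      (word_pal Δ Θ hinv hpal₁) (word_pal Δ Θ hinv hpalL) L₁ (by omega)
    have heq : L₁ + (L - L₁) = L := by omega
    rw [heq] at hs
    exact hs
  have C2 : ∀ n, n₂ ≤ n → Θ n = ϑ₂ →
      word Δ Θ ((prefixes Δ Θ (n + 1)).length) = a₂ := by
    intro n hn hθ
    set L := (prefixes Δ Θ (n + 1)).length with hLdef
    have hLL : L₂ ≤ L :=
      (prefixes_mono Δ Θ hinv (Nat.succ_le_succ hn)).length_le
    have hpalL : IsPal ϑ₂ (prefixes Δ Θ (n + 1)) := by
      rw [← hθ]; exact (prefixes_step Δ Θ hinv n).2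
    have hs := shift_lemma (word Δ Θ) py N hp hperN ϑ₂ (hinj ϑ₂ hϑ₂) L₂ L hLL hL₂big
      (word_pal Δ Θ hinv hpal₂) (word_pal Δ Θ hinv hpalL) L₂ (by omega)
    have heq : L₂ + (L - L₂) = L := by omega
    rw [heq] at hs
    exact hs
  -- every letter equals a₁ or a₂
  have C3 : ∀ a : Fin 3, a = a₁ ∨ a = a₂ := by
    intro a
    obtain ⟨n, hnmem, hn⟩ := (hΔ a).exists_gt (M + n₁ + n₂ + 1)
    have hnmem : Δ n = a := hnmem
    obtain ⟨m, rfl⟩ : ∃ m, n = m + 1 := ⟨n - 1, by omega⟩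
    have hΔa : word Δ Θ ((prefixes Δ Θ (m + 1)).length) = a := by
      rw [delta_eq Δ Θ hinv (m + 1), hnmem]
    rcases hM m (by omega) with hθ | hθ
    · left; rw [← hΔa, C1 m (by omega) hθ]
    · right; rw [← hΔa, C2 m (by omega) hθ]
  rcases C3 0 with e0 | e0 <;> rcases C3 1 with e1 | e1 <;> rcases C3 2 with e2 | e2 <;>
    first
      | exact absurd (e0.trans e1.symm) (by decide)
      | exact absurd (e0.trans e2.symm) (by decide)
      | exact absurd (e1.trans e2.symm) (by decide)

end GPS
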